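/- arXiv:1707.00109 — 3 statements merged into one kernel-verified Lean document; each statement's English description precedes it below -/
import Mathlib

section
/- Let X and Y be Banach spaces with X reflexive, U a dense linear subspace of X, and V a dense linear subspace of X*. Suppose j₀ : U → Y and k₀ : V → Y* are bounded linear operators such that the range of j₀ is dense in Y and ⟨x*, x⟩ = ⟨k₀(x*), j₀(x)⟩ for all x ∈ U, x* ∈ V. Then j₀ and k₀ extend to bounded linear operators j : X → Y and k : X* → Y* which are surjective (hence invertible), and for every x ∈ X one has (1/‖k‖)·‖x‖ ≤ ‖j(x)‖ ≤ ‖j‖·‖x‖, and for every x* ∈ X* one has (1/‖j‖)·‖x*‖ ≤ ‖k(x*)‖ ≤ ‖k‖·‖x*‖. -/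
open NormedSpace

/-- Lemma 2.1 of the paper: extension of a dual pair of densely defined operators. -/
theorem stmt0 {X Y : Type*} [NormedAddCommGroup X] [NormedSpace ℝ X] [CompleteSpace X]
    [NormedAddCommGroup Y] [NormedSpace ℝ Y] [CompleteSpace Y]
    (hrefl : Function.Surjective (NormedSpace.inclusionInDoubleDual ℝ X))
    (U : Submodule ℝ X) (hU : Dense (U : Set X))
    (V : Submodule ℝ (StrongDual ℝ X)) (hV : Dense (V : Set (StrongDual ℝ X)))
    (j₀ : U →L[ℝ] Y) (k₀ : V →L[ℝ] StrongDual ℝ Y)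
    (hdense : DenseRange j₀)
    (hpair : ∀ (x : U) (x' : V), (x' : StrongDual ℝ X) (x : X) = k₀ x' (j₀ x)) :
    ∃ (j : X →L[ℝ] Y) (k : StrongDual ℝ X →L[ℝ] StrongDual ℝ Y),
      (∀ u : U, j u = j₀ u) ∧ (∀ v : V, k v = k₀ v) ∧
      Function.Surjective j ∧ Function.Surjective k ∧
      (∀ x : X, (1 / ‖k‖) * ‖x‖ ≤ ‖j x‖ ∧ ‖j x‖ ≤ ‖j‖ * ‖x‖) ∧
      (∀ x' : StrongDual ℝ X, (1 / ‖j‖) * ‖x'‖ ≤ ‖k x'‖ ∧ ‖k x'‖ ≤ ‖k‖ * ‖x'‖) := by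
  -- extensions
  have hU1 : DenseRange (U.subtypeL : U →L[ℝ] X) := hU.denseRange_val
  have hU2 : IsUniformInducing (U.subtypeL : U →L[ℝ] X) :=
    (isometry_subtype_coe).isUniformInducing
  have hV1 : DenseRange (V.subtypeL : V →L[ℝ] StrongDual ℝ X) := hV.denseRange_val
  have hV2 : IsUniformInducing (V.subtypeL : V →L[ℝ] StrongDual ℝ X) :=
    (isometry_subtype_coe).isUniformInducing
  haveI : IsUniformAddGroup V := inferInstanceAs (IsUniformAddGroup V.toAddSubgroup)
  refine ⟨j₀.extend U.subtypeL, ContinuousLinearMap.extend (E := V) k₀ V.subtypeL, ?_⟩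
  set j : X →L[ℝ] Y := j₀.extend U.subtypeL with hjdef
  set k : StrongDual ℝ X →L[ℝ] StrongDual ℝ Y :=
    ContinuousLinearMap.extend (E := V) k₀ V.subtypeL with hkdef
  have hj : ∀ u : U, j u = j₀ u := fun u => j₀.extend_eq hU1 hU2 u
  have hk : ∀ v : V, k v = k₀ v := fun v => by
    apply ContinuousLinearMap.extend_eq
    · exact hV1
    · exact hV2
  -- the pairing identity for all x ∈ X, x' ∈ V
  have hpair1 : ∀ (x : X) (v : V), (v : StrongDual ℝ X) x = k₀ v (j x) := by
    intro x v
    have : Set.EqOn (fun x : X => (v : StrongDual ℝ X) x)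
        (fun x : X => k₀ v (j x)) (U : Set X) := by
      intro x hx
      simp only
      rw [show x = ((⟨x, hx⟩ : U) : X) from rfl, hj ⟨x, hx⟩]
      exact hpair ⟨x, hx⟩ v
    have := Continuous.ext_on hU (v : StrongDual ℝ X).continuous
      ((k₀ v).continuous.comp j.continuous) this
    exact congrFun this x
  -- the pairing identity for all x ∈ X, x' ∈ X*
  have hpair2 : ∀ (x : X) (x' : StrongDual ℝ X), x' x = k x' (j x) := by
    intro x x'
    have : Set.EqOn (fun x' : StrongDual ℝ X => x' x)
        (fun x' : StrongDual ℝ X => k x' (j x))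
        (V : Set (StrongDual ℝ X)) := by
      intro x' hx'
      simp only
      rw [show x' = ((⟨x', hx'⟩ : V) : StrongDual ℝ X) from rfl, hk ⟨x', hx'⟩]
      exact hpair1 x ⟨x', hx'⟩
    have := Continuous.ext_on hV
      (ContinuousLinearMap.apply ℝ ℝ x : StrongDual ℝ X →L[ℝ] ℝ).continuous
      ((ContinuousLinearMap.apply ℝ ℝ (j x)).continuous.comp k.continuous) this
    exact congrFun this x'
  -- lower bound for j
  have hlow_j : ∀ x : X, ‖x‖ ≤ ‖k‖ * ‖j x‖ := by
    intro x
    refine NormedSpace.norm_le_dual_bound ℝ x (by positivity) fun f => ?_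
    rw [hpair2 x f]
    calc ‖k f (j x)‖ ≤ ‖k f‖ * ‖j x‖ := (k f).le_opNorm _
      _ ≤ ‖k‖ * ‖f‖ * ‖j x‖ := by
          exact mul_le_mul_of_nonneg_right (k.le_opNorm f) (norm_nonneg _)
      _ = ‖k‖ * ‖j x‖ * ‖f‖ := by ring
  -- lower bound for k
  have hlow_k : ∀ x' : StrongDual ℝ X, ‖x'‖ ≤ ‖j‖ * ‖k x'‖ := by
    intro x'
    refine ContinuousLinearMap.opNorm_le_bound _ (by positivity) fun x => ?_
    rw [hpair2 x x']
    calc ‖k x' (j x)‖ ≤ ‖k x'‖ * ‖j x‖ := (k x').le_opNorm _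
      _ ≤ ‖k x'‖ * (‖j‖ * ‖x‖) := by
          exact mul_le_mul_of_nonneg_left (j.le_opNorm x) (norm_nonneg _)
      _ = ‖j‖ * ‖k x'‖ * ‖x‖ := by ring
  -- j is surjective: closed range + dense range
  have hanti : AntilipschitzWith ‖k‖₊ j := by
    refine AntilipschitzWith.of_le_mul_dist fun x y => ?_
    simp only [dist_eq_norm, ← map_sub]
    exact hlow_j (x - y)
  have hclosed : IsClosed (Set.range j) := hanti.isClosed_range j.uniformContinuous
  have hdrange : DenseRange j := by
    have hsub : Set.range (j₀ : U → Y) ⊆ Set.range j := by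
      rintro y ⟨u, rfl⟩; exact ⟨u, hj u⟩
    exact fun y => closure_mono hsub (hdense y)
  have hjsurj : Function.Surjective j := by
    intro y
    have : y ∈ closure (Set.range j) := hdrange y
    rwa [hclosed.closure_eq] at this
  -- k is surjective
  have hksurj : Function.Surjective k := by
    intro y'
    refine ⟨y'.comp j, ?_⟩
    ext y
    obtain ⟨x, rfl⟩ := hjsurj y
    have := hpair2 x (y'.comp j)
    simpa using this.symm
  refine ⟨hj, hk, hjsurj, hksurj, fun x => ⟨?_, j.le_opNorm x⟩,
    fun x' => ⟨?_, k.le_opNorm x'⟩⟩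
  · rcases eq_or_lt_of_le (norm_nonneg k) with h | h
    · rw [← h]; simp
    · rw [div_mul_eq_mul_div, one_mul, div_le_iff₀ h, mul_comm]
      exact hlow_j x
  · rcases eq_or_lt_of_le (norm_nonneg j) with h | h
    · rw [← h]; simp
    · rw [div_mul_eq_mul_div, one_mul, div_le_iff₀ h, mul_comm]
      exact hlow_k x'
end

section
/- Let 0 < p ≤ 1, let (Ω, F, P) be a probability space with a filtration (F_n)_{n≥0}, and let (f_n)_{n≥0} be a sequence of nonnegative integrable random variables. Then (E|∑_{n≥0} f_n|^p)^{1/p} ≤ p^{−1} · (E|∑_{n≥0} E(f_n | F_n)|^p)^{1/p}. -/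
open MeasureTheory ENNReal

lemma real_key {p : ℝ} (hp0 : 0 < p) (hp1 : p ≤ 1) {a c : ℝ} (ha : 0 ≤ a) (hc : 0 ≤ c) :
    a ^ p + p * (a + c) ^ (p - 1) * c ≤ (a + c) ^ p := by
  rcases eq_or_lt_of_le hc with hc0 | hc0
  · simp [← hc0]
  have hb : 0 < a + c := by linarith
  rcases eq_or_lt_of_le ha with ha0 | ha0
  · rw [← ha0, Real.zero_rpow hp0.ne', zero_add, zero_add]
    have hcc : c ^ (p - 1) * c = c ^ p := by
      rw [← Real.rpow_add_one hc0.ne']; norm_num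
    rw [mul_assoc, hcc]
    nlinarith [Real.rpow_nonneg hc p]
  · set b := a + c with hbdef
    have hderiv : ∀ t : ℝ, 0 < t → HasDerivAt (fun t : ℝ => t ^ p - p * b ^ (p-1) * t)
        (p * t ^ (p-1) - p * b ^ (p-1)) t := by
      intro t ht0
      have := (Real.hasDerivAt_rpow_const (p := p) (Or.inl ht0.ne')).sub
        ((hasDerivAt_id t).const_mul (p * b ^ (p-1)))
      exact this.congr_deriv (by ring)
    have hmono : MonotoneOn (fun t : ℝ => t ^ p - p * b ^ (p-1) * t) (Set.Icc a b) := by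
      apply monotoneOn_of_deriv_nonneg (convex_Icc a b)
      · apply continuousOn_of_forall_continuousAt
        intro t ht
        have ht0 : 0 < t := lt_of_lt_of_le ha0 ht.1
        exact (Real.continuousAt_rpow_const t p (Or.inl ht0.ne')).sub
          (continuousAt_id.const_mul _)
      · intro t ht
        rw [interior_Icc] at ht
        exact (hderiv t (lt_trans ha0 ht.1)).differentiableAt.differentiableWithinAt
      · intro t ht
        rw [interior_Icc] at ht
        have ht0 : 0 < t := lt_trans ha0 ht.1
        rw [(hderiv t ht0).deriv]
        have : b ^ (p-1) ≤ t ^ (p-1) :=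
          Real.rpow_le_rpow_of_nonpos ht0 (le_of_lt ht.2) (by linarith)
        nlinarith
    have h2 := hmono (Set.left_mem_Icc.2 (by linarith)) (Set.right_mem_Icc.2 (by linarith))
      (by linarith : a ≤ b)
    simp only at h2
    have h3 : p * b ^ (p-1) * b - p * b ^ (p-1) * a = p * b ^ (p-1) * c := by
      rw [hbdef]; ring
    linarith


lemma ennreal_key {p : ℝ} (hp0 : 0 < p) (hp1 : p ≤ 1) {a c : ℝ≥0∞} (ha : a ≠ ∞) (hc : c ≠ ∞) :
    a ^ p + ENNReal.ofReal p * (a + c) ^ (p - 1) * c ≤ (a + c) ^ p := by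
  rcases eq_or_ne (a + c) 0 with h0 | h0
  · rw [add_eq_zero] at h0
    simp [h0.1, h0.2, ENNReal.zero_rpow_of_pos hp0]
  · have hA : a = ENNReal.ofReal a.toReal := (ENNReal.ofReal_toReal ha).symm
    have hC : c = ENNReal.ofReal c.toReal := (ENNReal.ofReal_toReal hc).symm
    have ha0 : (0:ℝ) ≤ a.toReal := ENNReal.toReal_nonneg
    have hc0 : (0:ℝ) ≤ c.toReal := ENNReal.toReal_nonneg
    have hac : a + c = ENNReal.ofReal (a.toReal + c.toReal) := by
      rw [ENNReal.ofReal_add ha0 hc0, ← hA, ← hC]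
    have hpos : 0 < a.toReal + c.toReal := by
      rcases (lt_or_ge 0 (a.toReal + c.toReal)) with h | h
      · exact h
      · exfalso; apply h0
        have h1 : a.toReal = 0 := by linarith
        have h2 : c.toReal = 0 := by linarith
        rw [hA, hC, h1, h2]; simp
    calc a ^ p + ENNReal.ofReal p * (a + c) ^ (p - 1) * c
        = ENNReal.ofReal (a.toReal ^ p + p * (a.toReal + c.toReal) ^ (p - 1) * c.toReal) := by
          rw [ENNReal.ofReal_add (Real.rpow_nonneg ha0 p) (by positivity),
            ENNReal.ofReal_mul (by positivity : (0:ℝ) ≤ p * (a.toReal + c.toReal) ^ (p-1)),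
            ENNReal.ofReal_mul hp0.le,
            ← ENNReal.ofReal_rpow_of_nonneg ha0 hp0.le,
            ← ENNReal.ofReal_rpow_of_pos hpos, ← hac, ← hA, ← hC]
      _ ≤ ENNReal.ofReal ((a.toReal + c.toReal) ^ p) :=
          ENNReal.ofReal_le_ofReal (real_key hp0 hp1 ha0 hc0)
      _ = (a + c) ^ p := by
          rw [hac, ENNReal.ofReal_rpow_of_pos hpos]

lemma condexp_lintegral_mul {Ω : Type*} {m m0 : MeasurableSpace Ω} (hm : m ≤ m0)
    {μ : Measure Ω} [IsFiniteMeasure μ] {f : Ω → ℝ} (hfint : Integrable f μ)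
    (hf0 : 0 ≤ᵐ[μ] f) {φ : Ω → ℝ≥0∞} (hφ : Measurable[m] φ) :
    ∫⁻ ω, φ ω * ENNReal.ofReal (f ω) ∂μ = ∫⁻ ω, φ ω * ENNReal.ofReal ((μ[f|m]) ω) ∂μ := by
  have haef : AEMeasurable (fun ω => ENNReal.ofReal (f ω)) μ :=
    ENNReal.measurable_ofReal.comp_aemeasurable hfint.aestronglyMeasurable.aemeasurable
  have hmc : Measurable (fun ω => ENNReal.ofReal ((μ[f|m]) ω)) :=
    ENNReal.measurable_ofReal.comp ((stronglyMeasurable_condExp.mono hm).measurable)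
  refine @Measurable.ennreal_induction Ω m
    (fun φ => ∫⁻ ω, φ ω * ENNReal.ofReal (f ω) ∂μ
      = ∫⁻ ω, φ ω * ENNReal.ofReal ((μ[f|m]) ω) ∂μ) ?_ ?_ ?_ φ hφ
  · intro c s hs
    have hs0 : MeasurableSet[m0] s := hm s hs
    have key : ∀ (h : Ω → ℝ≥0∞),
        ∫⁻ ω, s.indicator (fun _ => c) ω * h ω ∂μ = ∫⁻ ω in s, c * h ω ∂μ := by
      intro h
      rw [← lintegral_indicator hs0]
      congr 1
      ext ω
      by_cases hω : ω ∈ s <;> simp [Set.indicator_apply, hω]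
    rw [key, key, lintegral_const_mul'' c (haef.restrict),
      lintegral_const_mul'' c (hmc.aemeasurable.restrict)]
    congr 1
    rw [← ofReal_integral_eq_lintegral_ofReal hfint.restrict (ae_restrict_of_ae hf0),
      ← ofReal_integral_eq_lintegral_ofReal integrable_condExp.restrict
        (ae_restrict_of_ae (condExp_nonneg hf0)),
      setIntegral_condExp hm hfint hs]
  · intro f1 f2 _ hf1 hf2 P1 P2
    simp only [Pi.add_apply, add_mul]
    rw [lintegral_add_left' (f := fun ω => f1 ω * ENNReal.ofReal (f ω))
        (((hf1.mono hm le_rfl)).aemeasurable.mul haef),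
      lintegral_add_left' (f := fun ω => f1 ω * ENNReal.ofReal ((μ[f|m]) ω))
        (((hf1.mono hm le_rfl)).aemeasurable.mul hmc.aemeasurable), P1, P2]
  · intro φn hφn hmon Pn
    simp only [ENNReal.iSup_mul]
    rw [lintegral_iSup' (f := fun n ω => φn n ω * ENNReal.ofReal (f ω)) (fun n => ((hφn n).mono hm le_rfl).aemeasurable.mul haef)
        (Filter.Eventually.of_forall fun ω => fun i j hij => mul_le_mul_left (hmon hij ω) _),
      lintegral_iSup' (f := fun n ω => φn n ω * ENNReal.ofReal ((μ[f|m]) ω)) (fun n => ((hφn n).mono hm le_rfl).aemeasurable.mul hmc.aemeasurable)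
        (Filter.Eventually.of_forall fun ω => fun i j hij => mul_le_mul_left (hmon hij ω) _)]
    exact iSup_congr Pn


lemma rpow_anti {x y : ℝ≥0∞} (h : x ≤ y) {z : ℝ} (hz : z ≤ 0) : y ^ z ≤ x ^ z := by
  calc y ^ z = (y ^ (-z))⁻¹ := by rw [← ENNReal.rpow_neg, neg_neg]
    _ ≤ (x ^ (-z))⁻¹ := ENNReal.inv_le_inv.2 (ENNReal.rpow_le_rpow h (neg_nonneg.2 hz))
    _ = x ^ z := by rw [← ENNReal.rpow_neg, neg_neg]

lemma aux_main {Ω : Type*} {m0 : MeasurableSpace Ω} {μ : Measure Ω} [IsProbabilityMeasure μ]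
    (ℱ : ℕ → MeasurableSpace Ω) (hle : ∀ n, ℱ n ≤ m0) (hmono : Monotone ℱ)
    {p : ℝ} (hp0 : 0 < p) (hp1 : p ≤ 1)
    (f : ℕ → Ω → ℝ) (hf0 : ∀ n ω, 0 ≤ f n ω)
    (hfint : ∀ n, Integrable (f n) μ)
    (g : ℕ → Ω → ℝ≥0∞) (hg : g = fun n ω => ENNReal.ofReal ((μ[f n | ℱ n]) ω))
    (F : Ω → ℝ≥0∞) (hF : F = fun ω => ∑' n, ENNReal.ofReal (f n ω))
    (G : Ω → ℝ≥0∞) (hG : G = fun ω => ∑' n, g n ω) :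
    (∫⁻ ω, F ω ^ p ∂μ) ^ (1 / p)
      ≤ ENNReal.ofReal p⁻¹ * (∫⁻ ω, G ω ^ p ∂μ) ^ (1 / p) := by
  have hgm : ∀ n, Measurable[ℱ n] (g n) := by
    subst hg
    exact fun n => ENNReal.measurable_ofReal.comp (stronglyMeasurable_condExp (m := ℱ n)).measurable
  have hgm0 : ∀ n, Measurable (g n) := fun n => (hgm n).mono (hle n) le_rfl
  have hgfin : ∀ n ω, g n ω ≠ ∞ := by subst hg; exact fun n ω => ENNReal.ofReal_ne_top
  have hGm : Measurable G := by rw [hG]; exact Measurable.ennreal_tsum hgm0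
  have hFaem : AEMeasurable F μ := by
    rw [hF]
    exact AEMeasurable.ennreal_tsum fun n =>
      ENNReal.measurable_ofReal.comp_aemeasurable (hfint n).aestronglyMeasurable.aemeasurable
  set S : ℕ → Ω → ℝ≥0∞ := fun N ω => ∑ k ∈ Finset.range N, g k ω with hSdef
  have hSmeas : ∀ n, Measurable[ℱ n] (S (n+1)) := fun n =>
    Finset.measurable_sum _ fun k hk =>
      (hgm k).mono (hmono (Nat.lt_succ_iff.1 (Finset.mem_range.1 hk))) le_rfl
  have hSm0 : ∀ N, Measurable (S N) := fun N => Finset.measurable_sum _ fun k _ => hgm0 k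
  have hSfin : ∀ N ω, S N ω ≠ ∞ := fun N ω =>
    (ENNReal.sum_lt_top.2 fun k _ => (hgfin k ω).lt_top).ne
  have hSleG : ∀ N ω, S N ω ≤ G ω := by
    rw [hG]; exact fun N ω => ENNReal.sum_le_tsum _
  -- pointwise key inequality
  have hptwise : ∀ ω, ∑' n, ENNReal.ofReal p * (S (n+1) ω) ^ (p-1) * g n ω ≤ G ω ^ p := by
    intro ω
    have hstep : ∀ N, ∑ k ∈ Finset.range N,
        ENNReal.ofReal p * (S (k+1) ω) ^ (p-1) * g k ω ≤ (S N ω) ^ p := by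
      intro N
      induction N with
      | zero => simp
      | succ N ih =>
        rw [Finset.sum_range_succ]
        have hS1 : S (N+1) ω = S N ω + g N ω := Finset.sum_range_succ _ _
        calc ∑ k ∈ Finset.range N, ENNReal.ofReal p * (S (k+1) ω) ^ (p-1) * g k ω
              + ENNReal.ofReal p * (S (N+1) ω) ^ (p-1) * g N ω
            ≤ (S N ω) ^ p + ENNReal.ofReal p * (S (N+1) ω) ^ (p-1) * g N ω :=
              add_le_add_left ih _
          _ ≤ (S (N+1) ω) ^ p := by
              rw [hS1]; exact ennreal_key hp0 hp1 (hSfin N ω) (hgfin N ω)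
    rw [ENNReal.tsum_eq_iSup_nat]
    exact iSup_le fun N => (hstep N).trans (ENNReal.rpow_le_rpow (hSleG N ω) hp0.le)
  -- key integral inequality
  have h1 : ∀ n, ∫⁻ ω, G ω ^ (p-1) * ENNReal.ofReal (f n ω) ∂μ
      ≤ ∫⁻ ω, (S (n+1) ω) ^ (p-1) * g n ω ∂μ := by
    intro n
    have heq : ∫⁻ ω, (S (n+1) ω) ^ (p-1) * ENNReal.ofReal (f n ω) ∂μ
        = ∫⁻ ω, (S (n+1) ω) ^ (p-1) * g n ω ∂μ := by
      have := condexp_lintegral_mul (hle n) (hfint n)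
        (Filter.Eventually.of_forall (hf0 n))
        (φ := fun ω => (S (n+1) ω) ^ (p-1)) ((hSmeas n).pow measurable_const)
      simpa [hg] using this
    rw [← heq]
    exact lintegral_mono fun ω =>
      mul_le_mul_left (rpow_anti (hSleG (n+1) ω) (by linarith)) _
  have hFsplit : ∫⁻ ω, G ω ^ (p-1) * F ω ∂μ
      = ∑' n, ∫⁻ ω, G ω ^ (p-1) * ENNReal.ofReal (f n ω) ∂μ := by
    have hsw := lintegral_tsum (μ := μ)
      (f := fun n ω => G ω ^ (p-1) * ENNReal.ofReal (f n ω)) fun n =>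
        (hGm.pow measurable_const).aemeasurable.mul
          (ENNReal.measurable_ofReal.comp_aemeasurable (hfint n).aestronglyMeasurable.aemeasurable)
    rw [← hsw]
    refine lintegral_congr fun ω => ?_
    rw [hF]
    exact ENNReal.tsum_mul_left.symm
  have hKEY : ENNReal.ofReal p * ∫⁻ ω, G ω ^ (p-1) * F ω ∂μ ≤ ∫⁻ ω, G ω ^ p ∂μ := by
    calc ENNReal.ofReal p * ∫⁻ ω, G ω ^ (p-1) * F ω ∂μ
        = ∑' n, ENNReal.ofReal p * ∫⁻ ω, G ω ^ (p-1) * ENNReal.ofReal (f n ω) ∂μ := by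
          rw [hFsplit, ENNReal.tsum_mul_left]
      _ ≤ ∑' n, ENNReal.ofReal p * ∫⁻ ω, (S (n+1) ω) ^ (p-1) * g n ω ∂μ :=
          ENNReal.tsum_le_tsum fun n => mul_le_mul_right (h1 n) _
      _ = ∑' n, ∫⁻ ω, ENNReal.ofReal p * ((S (n+1) ω) ^ (p-1) * g n ω) ∂μ :=
          tsum_congr fun n => (lintegral_const_mul'' _
            (((hSm0 (n+1)).pow measurable_const).mul (hgm0 n)).aemeasurable).symm
      _ = ∫⁻ ω, ∑' n, ENNReal.ofReal p * ((S (n+1) ω) ^ (p-1) * g n ω) ∂μ :=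
          (lintegral_tsum fun n => (measurable_const.mul
            (((hSm0 (n+1)).pow measurable_const).mul (hgm0 n))).aemeasurable).symm
      _ ≤ ∫⁻ ω, G ω ^ p ∂μ := lintegral_mono fun ω => by
          simpa [mul_assoc] using hptwise ω
  -- F vanishes where G vanishes
  have hF0 : ∀ᵐ ω ∂μ, G ω = 0 → F ω = 0 := by
    have hn : ∀ n, ∀ᵐ ω ∂μ, S (n+1) ω = 0 → f n ω = 0 := by
      intro n
      have hAmeasF : MeasurableSet[ℱ n] (S (n+1) ⁻¹' {0}) :=
        (hSmeas n) (measurableSet_singleton 0)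
      have hAmeas : MeasurableSet (S (n+1) ⁻¹' {0}) := hle n _ hAmeasF
      have hint : ∫ ω in S (n+1) ⁻¹' {0}, f n ω ∂μ
          = ∫ ω in S (n+1) ⁻¹' {0}, (μ[f n | ℱ n]) ω ∂μ :=
        (setIntegral_condExp (hle n) (hfint n) hAmeasF).symm
      have hle0 : ∀ ω ∈ S (n+1) ⁻¹' {0}, (μ[f n | ℱ n]) ω ≤ 0 := by
        intro ω hω
        have hsingle : g n ω ≤ S (n+1) ω :=
          Finset.single_le_sum (f := fun k => g k ω) (fun i _ => zero_le)
            (Finset.self_mem_range_succ n)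
        have hgz : g n ω = 0 := le_antisymm (hω ▸ hsingle) (zero_le)
        rw [hg] at hgz
        exact ENNReal.ofReal_eq_zero.1 hgz
      have h2 : ∫ ω in S (n+1) ⁻¹' {0}, (μ[f n | ℱ n]) ω ∂μ ≤ 0 := by
        exact integral_nonpos_of_ae ((ae_restrict_iff' hAmeas).2
          (Filter.Eventually.of_forall fun ω hω => hle0 ω hω))
      have h3 : ∫ ω in S (n+1) ⁻¹' {0}, f n ω ∂μ = 0 :=
        le_antisymm (hint ▸ h2) (integral_nonneg fun ω => hf0 n ω)
      have h4 : f n =ᵐ[μ.restrict (S (n+1) ⁻¹' {0})] 0 :=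
        (integral_eq_zero_iff_of_nonneg (fun ω => hf0 n ω) ((hfint n).restrict)).1 h3
      have h5 := (ae_restrict_iff' hAmeas).1 h4
      filter_upwards [h5] with ω hω hS0
      exact hω hS0
    filter_upwards [ae_all_iff.2 hn] with ω hω hG0
    have hf0' : ∀ n, f n ω = 0 := fun n =>
      hω n (le_antisymm (hG0 ▸ hSleG (n+1) ω) (zero_le))
    rw [hF]
    simp [hf0']
  -- endgame
  rcases eq_or_lt_of_le hp1 with hp1' | hp1'
  · subst hp1'
    have hper : ∀ n, ∫⁻ ω, ENNReal.ofReal (f n ω) ∂μ = ∫⁻ ω, g n ω ∂μ := by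
      intro n
      have := condexp_lintegral_mul (hle n) (hfint n)
        (Filter.Eventually.of_forall (hf0 n)) (φ := fun _ => (1:ℝ≥0∞)) measurable_const
      simpa [hg] using this
    norm_num [ENNReal.rpow_one]
    simp only [hF, hG]
    have hswF := lintegral_tsum (μ := μ) (f := fun n ω => ENNReal.ofReal (f n ω)) fun n =>
      ENNReal.measurable_ofReal.comp_aemeasurable (hfint n).aestronglyMeasurable.aemeasurable
    have hswG := lintegral_tsum (μ := μ) (f := fun n ω => g n ω) fun n => (hgm0 n).aemeasurable
    rw [hswF, hswG]
    exact le_of_eq (tsum_congr hper)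
  · rcases eq_or_ne (∫⁻ ω, G ω ^ p ∂μ) ∞ with hI | hI
    · rw [hI, ENNReal.top_rpow_of_pos (by positivity), ENNReal.mul_top
        (ENNReal.ofReal_pos.2 (inv_pos.2 hp0)).ne']
      exact le_top
    · rcases eq_or_ne (∫⁻ ω, G ω ^ p ∂μ) 0 with hI0 | hI0
      · have hG0 := (lintegral_eq_zero_iff (hGm.pow measurable_const)).1 hI0
        have hF0' : (fun ω => F ω ^ p) =ᵐ[μ] 0 := by
          filter_upwards [hG0, hF0] with ω hω1 hω2
          have hGz : G ω = 0 := by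
            by_contra hne
            rcases ENNReal.rpow_eq_zero_iff.1 hω1 with ⟨h, _⟩ | ⟨_, hneg⟩
            · exact hne h
            · linarith
          simp [hω2 hGz, ENNReal.zero_rpow_of_pos hp0]
        rw [lintegral_congr_ae hF0']
        simp only [Pi.zero_apply, lintegral_zero]
        rw [ENNReal.zero_rpow_of_pos (show (0:ℝ) < 1/p by positivity)]
        exact zero_le
      · -- main case: 0 < ∫ G^p < ∞
        have hGfin : ∀ᵐ ω ∂μ, G ω ≠ ∞ := by
          filter_upwards [ae_lt_top (hGm.pow measurable_const) hI] with ω h hinf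
          rw [hinf, ENNReal.top_rpow_of_pos hp0] at h
          exact lt_irrefl _ h
        have hpoint : ∀ᵐ ω ∂μ, F ω ^ p ≤ ((G ω ^ (p-1) * F ω) ^ p) * ((G ω ^ p) ^ (1-p)) := by
          filter_upwards [hGfin, hF0] with ω hfin h0
          rcases eq_or_ne (G ω) 0 with hGz | hGz
          · rw [h0 hGz, ENNReal.zero_rpow_of_pos hp0]
            exact zero_le
          · refine le_of_eq ?_
            rw [ENNReal.mul_rpow_of_nonneg _ _ hp0.le, ← ENNReal.rpow_mul, ← ENNReal.rpow_mul]
            have hone : G ω ^ ((p-1)*p) * G ω ^ (p*(1-p)) = 1 := by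
              rw [← ENNReal.rpow_add _ _ hGz hfin, show (p-1)*p + p*(1-p) = 0 by ring,
                ENNReal.rpow_zero]
            calc F ω ^ p = F ω ^ p * (G ω ^ ((p-1)*p) * G ω ^ (p*(1-p))) := by
                  rw [hone, mul_one]
              _ = G ω ^ ((p-1)*p) * F ω ^ p * G ω ^ (p*(1-p)) := by ring
        have hconj : (1/p).HolderConjugate (1/(1-p)) :=
          Real.holderConjugate_one_div hp0 (by linarith) (by ring)
        have hu : AEMeasurable (fun ω => (G ω ^ (p-1) * F ω) ^ p) μ :=
          ((hGm.pow measurable_const).aemeasurable.mul hFaem).pow aemeasurable_const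
        have hv : AEMeasurable (fun ω => (G ω ^ p) ^ (1-p)) μ :=
          ((hGm.pow measurable_const).pow measurable_const).aemeasurable
        have hH := ENNReal.lintegral_mul_le_Lp_mul_Lq μ hconj hu hv
        have hu1 : ∀ ω, ((G ω ^ (p-1) * F ω) ^ p) ^ (1/p) = G ω ^ (p-1) * F ω := fun ω => by
          rw [← ENNReal.rpow_mul, mul_one_div_cancel hp0.ne', ENNReal.rpow_one]
        have hv1 : ∀ ω, ((G ω ^ p) ^ (1-p)) ^ (1/(1-p)) = G ω ^ p := fun ω => by
          rw [← ENNReal.rpow_mul, mul_one_div_cancel (by linarith : (1:ℝ) - p ≠ 0),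
            ENNReal.rpow_one]
        simp only [Pi.mul_apply, hu1, hv1, one_div_one_div] at hH
        have hFp : ∫⁻ ω, F ω ^ p ∂μ ≤
            (∫⁻ ω, G ω ^ (p-1) * F ω ∂μ) ^ p * (∫⁻ ω, G ω ^ p ∂μ) ^ (1-p) :=
          (lintegral_mono_ae hpoint).trans hH
        have hne0 : (ENNReal.ofReal p) ≠ 0 := (ENNReal.ofReal_pos.2 hp0).ne'
        have hdiv : ∫⁻ ω, G ω ^ (p-1) * F ω ∂μ
            ≤ (ENNReal.ofReal p)⁻¹ * ∫⁻ ω, G ω ^ p ∂μ := by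
          calc ∫⁻ ω, G ω ^ (p-1) * F ω ∂μ
              = (ENNReal.ofReal p)⁻¹ * (ENNReal.ofReal p * ∫⁻ ω, G ω ^ (p-1) * F ω ∂μ) := by
                rw [← mul_assoc, ENNReal.inv_mul_cancel hne0 ENNReal.ofReal_ne_top, one_mul]
            _ ≤ _ := mul_le_mul_right hKEY _
        calc (∫⁻ ω, F ω ^ p ∂μ) ^ (1/p)
            ≤ (((ENNReal.ofReal p)⁻¹ * ∫⁻ ω, G ω ^ p ∂μ) ^ p
                * (∫⁻ ω, G ω ^ p ∂μ) ^ (1-p)) ^ (1/p) :=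
              ENNReal.rpow_le_rpow (hFp.trans (mul_le_mul_left
                (ENNReal.rpow_le_rpow hdiv hp0.le) _)) (by positivity)
          _ = ENNReal.ofReal p⁻¹ * (∫⁻ ω, G ω ^ p ∂μ) ^ (1/p) := by
              rw [ENNReal.mul_rpow_of_nonneg _ _ (by positivity : (0:ℝ) ≤ 1/p),
                ← ENNReal.rpow_mul, ← ENNReal.rpow_mul, mul_one_div_cancel hp0.ne',
                ENNReal.rpow_one, ENNReal.ofReal_inv_of_pos hp0, mul_assoc]
              congr 1
              nth_rewrite 1 [← ENNReal.rpow_one (∫⁻ ω, G ω ^ p ∂μ)]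
              rw [← ENNReal.rpow_add _ _ hI0 hI,
                show (1:ℝ) + (1-p)*(1/p) = 1/p from by field_simp; ring]

/-- Reverse dual Doob inequality: for `0 < p ≤ 1` and nonnegative integrable `f_n`,
`(E|∑ f_n|^p)^{1/p} ≤ p⁻¹ (E|∑ E(f_n|F_n)|^p)^{1/p}`. -/
theorem stmt3 {Ω : Type*} {m0 : MeasurableSpace Ω} {μ : Measure Ω} [IsProbabilityMeasure μ]
    (ℱ : ℕ → MeasurableSpace Ω) (hle : ∀ n, ℱ n ≤ m0) (hmono : Monotone ℱ)
    {p : ℝ} (hp0 : 0 < p) (hp1 : p ≤ 1)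
    (f : ℕ → Ω → ℝ) (hf0 : ∀ n ω, 0 ≤ f n ω)
    (hfint : ∀ n, Integrable (f n) μ) :
    (∫⁻ ω, (∑' n, ENNReal.ofReal (f n ω)) ^ p ∂μ) ^ (1 / p)
      ≤ ENNReal.ofReal p⁻¹ *
        (∫⁻ ω, (∑' n, ENNReal.ofReal ((μ[f n | ℱ n]) ω)) ^ p ∂μ) ^ (1 / p) := by
  exact aux_main ℱ hle hmono hp0 hp1 f hf0 hfint _ rfl _ rfl _ rfl
end

section
/- Let (X, Y) be a compatible couple of Banach spaces (both continuously embedded in a Hausdorff topological vector space) such that X ∩ Y is dense in both X and Y. Then (X ∩ Y)* = X* + Y* and (X + Y)* = X* ∩ Y* hold isometrically, where X ∩ Y carries the norm max{‖z‖_X, ‖z‖_Y} and X + Y carries the norm inf{‖x‖_X + ‖y‖_Y : z = x + y}. -/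
open NormedSpace

/-- The sum norm `‖z‖_{X+Y} = inf{‖x‖_X + ‖y‖_Y : z = x + y}` on the ambient space `Z`,
for a compatible couple given by continuous embeddings `iX : X → Z`, `iY : Y → Z`. -/
noncomputable def sumNorm {Z X Y : Type*}
    [AddCommGroup Z] [Module ℝ Z] [TopologicalSpace Z]
    [IsTopologicalAddGroup Z] [ContinuousSMul ℝ Z]
    [NormedAddCommGroup X] [NormedSpace ℝ X]
    [NormedAddCommGroup Y] [NormedSpace ℝ Y]
    (iX : X →L[ℝ] Z) (iY : Y →L[ℝ] Z) (z : Z) : ℝ :=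
  sInf {r | ∃ (x : X) (y : Y), iX x + iY y = z ∧ r = ‖x‖ + ‖y‖}

section Aux

set_option linter.unusedSectionVars false

variable {Z X Y : Type*}
    [AddCommGroup Z] [Module ℝ Z] [TopologicalSpace Z]
    [IsTopologicalAddGroup Z] [ContinuousSMul ℝ Z]
    [NormedAddCommGroup X] [NormedSpace ℝ X]
    [NormedAddCommGroup Y] [NormedSpace ℝ Y]

lemma sumNorm_le (iX : X →L[ℝ] Z) (iY : Y →L[ℝ] Z) {z : Z} {x : X} {y : Y}
    (h : iX x + iY y = z) : sumNorm iX iY z ≤ ‖x‖ + ‖y‖ := by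
  apply csInf_le
  · refine ⟨0, ?_⟩
    rintro r ⟨x', y', -, rfl⟩
    positivity
  · exact ⟨x, y, h, rfl⟩

lemma abs_le_mul_sInf {S : Set ℝ} {a M : ℝ} (hM : 0 ≤ M) (hne : S.Nonempty)
    (h : ∀ r ∈ S, a ≤ M * r) : a ≤ M * sInf S := by
  rcases eq_or_lt_of_le hM with h0 | hM'
  · obtain ⟨r, hr⟩ := hne
    have := h r hr
    rw [← h0] at this ⊢
    simpa using this
  · rw [← div_le_iff₀' hM']
    exact le_csInf hne fun r hr => (div_le_iff₀' hM').2 (h r hr)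

/-- For a pair of compatible functionals, there is a lift to the sum. -/
lemma exists_lift (iX : X →ₗ[ℝ] Z) (iY : Y →ₗ[ℝ] Z) (f : X →ₗ[ℝ] ℝ) (g : Y →ₗ[ℝ] ℝ)
    (hc : ∀ x y, iX x = iY y → f x = g y) :
    ∃ F : ↥(LinearMap.range iX ⊔ LinearMap.range iY) →ₗ[ℝ] ℝ,
      ∀ (x : X) (y : Y) (hz : iX x + iY y ∈ LinearMap.range iX ⊔ LinearMap.range iY),
        F ⟨iX x + iY y, hz⟩ = f x + g y := by
  set T : X × Y →ₗ[ℝ] Z := iX.coprod iY with hT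
  have hr : LinearMap.range T = LinearMap.range iX ⊔ LinearMap.range iY :=
    LinearMap.range_coprod _ _
  have hk : LinearMap.ker T ≤ LinearMap.ker (f.coprod g) := by
    rintro ⟨x, y⟩ h
    simp only [LinearMap.mem_ker, LinearMap.coprod_apply, hT] at h ⊢
    have hxy : iX x = iY (-y) := by
      rw [map_neg]
      exact eq_neg_of_add_eq_zero_left h
    have := hc x (-y) hxy
    rw [map_neg] at this
    linarith
  let e : ((X × Y) ⧸ LinearMap.ker T) ≃ₗ[ℝ] ↥(LinearMap.range iX ⊔ LinearMap.range iY) :=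
    T.quotKerEquivRange.trans (LinearEquiv.ofEq _ _ hr)
  refine ⟨((LinearMap.ker T).liftQ (f.coprod g) hk).comp e.symm.toLinearMap, ?_⟩
  intro x y hz
  have he : e (Submodule.Quotient.mk (x, y)) = ⟨iX x + iY y, hz⟩ := by
    apply Subtype.ext
    simp [e, T, LinearMap.quotKerEquivRange_apply_mk]
  rw [LinearMap.comp_apply, ← he]
  simp only [LinearEquiv.coe_coe, LinearEquiv.symm_apply_apply]
  simp [Submodule.liftQ_apply]

lemma exists_unit (f : X →L[ℝ] ℝ) {ε : ℝ} (hε : 0 < ε) :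
    ∃ x : X, ‖x‖ ≤ 1 ∧ ‖f‖ - ε < f x := by
  obtain ⟨x, hx, hlt⟩ := f.exists_lt_apply_of_lt_opNorm (sub_lt_self ‖f‖ hε)
  rw [Real.norm_eq_abs] at hlt
  rcases abs_cases (f x) with ⟨he, -⟩ | ⟨he, -⟩
  · exact ⟨x, hx.le, by rwa [he] at hlt⟩
  · refine ⟨-x, by simpa using hx.le, ?_⟩
    rw [map_neg]
    rwa [he] at hlt

end Aux

/-- Duality for sums and intersections of a compatible couple `(X, Y)` of Banach spaces,
continuously embedded in a Hausdorff topological vector space `Z`, with `X ∩ Y` dense in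
both `X` and `Y`:  `(X ∩ Y)* = X* + Y*` and `(X + Y)* = X* ∩ Y*` hold isometrically.
Here `X ∩ Y` is realised as the submodule `I = {(x, y) : iX x = iY y}` of `X × Y`
(whose induced norm is `max{‖x‖, ‖y‖}`), and `X + Y` as the submodule
`range iX ⊔ range iY` of `Z` equipped with the sum norm `sumNorm`. -/
theorem stmt6 {Z X Y : Type*}
    [AddCommGroup Z] [Module ℝ Z] [TopologicalSpace Z] [T2Space Z]
    [IsTopologicalAddGroup Z] [ContinuousSMul ℝ Z]
    [NormedAddCommGroup X] [NormedSpace ℝ X] [CompleteSpace X]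
    [NormedAddCommGroup Y] [NormedSpace ℝ Y] [CompleteSpace Y]
    (iX : X →L[ℝ] Z) (iY : Y →L[ℝ] Z)
    (hiX : Function.Injective iX) (hiY : Function.Injective iY)
    (I : Submodule ℝ (X × Y))
    (hI : ∀ pt : X × Y, pt ∈ I ↔ iX pt.1 = iY pt.2)
    (hdX : DenseRange fun pt : I => (pt : X × Y).1)
    (hdY : DenseRange fun pt : I => (pt : X × Y).2) :
    -- `(X ∩ Y)* = X* + Y*` isometrically: every functional on `I` is induced by a pair
    -- `(f, g) ∈ X* × Y*`, and its norm is the sum-infimum over all such representations.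
    (∀ h : I →L[ℝ] ℝ,
      (∃ (f : StrongDual ℝ X) (g : StrongDual ℝ Y),
          ∀ pt : I, h pt = f (pt : X × Y).1 + g (pt : X × Y).2) ∧
      ‖h‖ = sInf {r | ∃ (f : StrongDual ℝ X) (g : StrongDual ℝ Y),
          (∀ pt : I, h pt = f (pt : X × Y).1 + g (pt : X × Y).2) ∧ r = ‖f‖ + ‖g‖}) ∧
    -- `(X + Y)* = X* ∩ Y*` isometrically: bounded functionals on `X + Y` (with the sum
    -- norm) correspond to compatible pairs `(f, g)`, with norm `max{‖f‖, ‖g‖}`.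
    (∀ (f : StrongDual ℝ X) (g : StrongDual ℝ Y),
      (∀ (x : X) (y : Y), iX x = iY y → f x = g y) →
      ∃ F : (LinearMap.range (iX : X →ₗ[ℝ] Z) ⊔ LinearMap.range (iY : Y →ₗ[ℝ] Z) :
          Submodule ℝ Z) →ₗ[ℝ] ℝ,
        (∀ (x : X) (y : Y)
            (hz : iX x + iY y ∈
              LinearMap.range (iX : X →ₗ[ℝ] Z) ⊔ LinearMap.range (iY : Y →ₗ[ℝ] Z)),
          F ⟨iX x + iY y, hz⟩ = f x + g y) ∧
        sInf {c | 0 ≤ c ∧ ∀ z : (LinearMap.range (iX : X →ₗ[ℝ] Z) ⊔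
              LinearMap.range (iY : Y →ₗ[ℝ] Z) : Submodule ℝ Z),
            |F z| ≤ c * sumNorm iX iY (z : Z)} = max ‖f‖ ‖g‖ ∧
        (∀ F' : (LinearMap.range (iX : X →ₗ[ℝ] Z) ⊔ LinearMap.range (iY : Y →ₗ[ℝ] Z) :
            Submodule ℝ Z) →ₗ[ℝ] ℝ,
          (∀ (x : X) (y : Y)
              (hz : iX x + iY y ∈
                LinearMap.range (iX : X →ₗ[ℝ] Z) ⊔ LinearMap.range (iY : Y →ₗ[ℝ] Z)),
            F' ⟨iX x + iY y, hz⟩ = f x + g y) → F' = F)) ∧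
    (∀ F : (LinearMap.range (iX : X →ₗ[ℝ] Z) ⊔ LinearMap.range (iY : Y →ₗ[ℝ] Z) :
        Submodule ℝ Z) →ₗ[ℝ] ℝ,
      (∃ c : ℝ, 0 ≤ c ∧ ∀ z : (LinearMap.range (iX : X →ₗ[ℝ] Z) ⊔
            LinearMap.range (iY : Y →ₗ[ℝ] Z) : Submodule ℝ Z),
          |F z| ≤ c * sumNorm iX iY (z : Z)) →
      ∃ (f : StrongDual ℝ X) (g : StrongDual ℝ Y),
        (∀ (x : X) (y : Y), iX x = iY y → f x = g y) ∧
        ∀ (x : X) (y : Y)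
            (hz : iX x + iY y ∈
              LinearMap.range (iX : X →ₗ[ℝ] Z) ⊔ LinearMap.range (iY : Y →ₗ[ℝ] Z)),
          F ⟨iX x + iY y, hz⟩ = f x + g y) := by
  refine ⟨?_, ?_, ?_⟩
  · -- Part 1
    intro h
    obtain ⟨H, hH, hnorm⟩ := exists_extension_norm_eq I h
    set f : StrongDual ℝ X := H.comp (ContinuousLinearMap.inl ℝ X Y) with hf
    set g : StrongDual ℝ Y := H.comp (ContinuousLinearMap.inr ℝ X Y) with hg
    have hrep : ∀ pt : I, h pt = f (pt : X × Y).1 + g (pt : X × Y).2 := by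
      intro pt
      rw [← hH pt]
      have hsplit : ((pt : X × Y).1, (0 : Y)) + ((0 : X), (pt : X × Y).2) = (pt : X × Y) := by
        ext <;> simp
      calc H (pt : X × Y) = H (((pt : X × Y).1, (0 : Y)) + ((0 : X), (pt : X × Y).2)) := by
            rw [hsplit]
        _ = f (pt : X × Y).1 + g (pt : X × Y).2 := by
            rw [map_add]
            simp [hf, hg]
    refine ⟨⟨f, g, hrep⟩, le_antisymm ?_ ?_⟩
    · -- ‖h‖ ≤ sInf
      refine le_csInf ⟨‖f‖ + ‖g‖, f, g, hrep, rfl⟩ ?_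
      rintro r ⟨f', g', hfg, rfl⟩
      refine h.opNorm_le_bound (by positivity) fun pt => ?_
      have h1 : ‖(pt : X × Y).1‖ ≤ ‖pt‖ := norm_fst_le (pt : X × Y)
      have h2 : ‖(pt : X × Y).2‖ ≤ ‖pt‖ := norm_snd_le (pt : X × Y)
      rw [hfg pt]
      calc ‖f' (pt : X × Y).1 + g' (pt : X × Y).2‖
          ≤ ‖f' (pt : X × Y).1‖ + ‖g' (pt : X × Y).2‖ := norm_add_le _ _
        _ ≤ ‖f'‖ * ‖(pt : X × Y).1‖ + ‖g'‖ * ‖(pt : X × Y).2‖ :=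
            add_le_add (f'.le_opNorm _) (g'.le_opNorm _)
        _ ≤ ‖f'‖ * ‖pt‖ + ‖g'‖ * ‖pt‖ :=
            add_le_add (mul_le_mul_of_nonneg_left h1 (norm_nonneg _))
              (mul_le_mul_of_nonneg_left h2 (norm_nonneg _))
        _ = (‖f'‖ + ‖g'‖) * ‖pt‖ := by ring
    · -- sInf ≤ ‖h‖
      have hbdd : BddBelow {r | ∃ (f : StrongDual ℝ X) (g : StrongDual ℝ Y),
          (∀ pt : I, h pt = f (pt : X × Y).1 + g (pt : X × Y).2) ∧ r = ‖f‖ + ‖g‖} := by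
        refine ⟨0, ?_⟩
        rintro r ⟨f', g', -, rfl⟩
        positivity
      have hle : ‖f‖ + ‖g‖ ≤ ‖H‖ := by
        by_contra hcon
        push_neg at hcon
        set ε := (‖f‖ + ‖g‖ - ‖H‖) / 2 with hεdef
        have hε : 0 < ε := by simp only [hεdef]; linarith
        obtain ⟨x, hx1, hx2⟩ := exists_unit f (half_pos hε)
        obtain ⟨y, hy1, hy2⟩ := exists_unit g (half_pos hε)
        have hxy : f x + g y = H (x, y) := by
          have : ((x, (0 : Y)) + ((0 : X), y)) = (x, y) := by ext <;> simp
          rw [hf, hg]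
          simp only [ContinuousLinearMap.comp_apply, ContinuousLinearMap.inl_apply,
            ContinuousLinearMap.inr_apply]
          rw [← map_add, this]
        have hnxy : ‖((x, y) : X × Y)‖ ≤ 1 := by
          rw [Prod.norm_def]
          exact max_le hx1 hy1
        have hHb : H (x, y) ≤ ‖H‖ := by
          calc H (x, y) ≤ ‖H (x, y)‖ := le_abs_self _
            _ ≤ ‖H‖ * ‖((x, y) : X × Y)‖ := H.le_opNorm _
            _ ≤ ‖H‖ * 1 := mul_le_mul_of_nonneg_left hnxy (norm_nonneg _)
            _ = ‖H‖ := mul_one _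
        have : ‖f‖ + ‖g‖ - ε < H (x, y) := by rw [← hxy]; linarith
        simp only [hεdef] at this
        linarith
      calc sInf _ ≤ ‖f‖ + ‖g‖ := csInf_le hbdd ⟨f, g, hrep, rfl⟩
        _ ≤ ‖H‖ := hle
        _ = ‖h‖ := hnorm
  · -- Part 2
    intro f g hc
    have hc' : ∀ x y, (iX : X →ₗ[ℝ] Z) x = (iY : Y →ₗ[ℝ] Z) y →
        (f : X →ₗ[ℝ] ℝ) x = (g : Y →ₗ[ℝ] ℝ) y := hc
    obtain ⟨F, hF⟩ := exists_lift (iX : X →ₗ[ℝ] Z) (iY : Y →ₗ[ℝ] Z)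
      (f : X →ₗ[ℝ] ℝ) (g : Y →ₗ[ℝ] ℝ) hc'
    have hF' : ∀ (x : X) (y : Y)
        (hz : iX x + iY y ∈
          LinearMap.range (iX : X →ₗ[ℝ] Z) ⊔ LinearMap.range (iY : Y →ₗ[ℝ] Z)),
        F ⟨iX x + iY y, hz⟩ = f x + g y := hF
    have hrepz : ∀ z : (LinearMap.range (iX : X →ₗ[ℝ] Z) ⊔ LinearMap.range (iY : Y →ₗ[ℝ] Z) :
        Submodule ℝ Z), ∃ (x : X) (y : Y), iX x + iY y = (z : Z) := by
      intro z
      obtain ⟨a, ha, b, hb, hab⟩ := Submodule.mem_sup.mp z.2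
      obtain ⟨x, rfl⟩ := ha
      obtain ⟨y, rfl⟩ := hb
      exact ⟨x, y, hab⟩
    have hFz : ∀ (z : (LinearMap.range (iX : X →ₗ[ℝ] Z) ⊔ LinearMap.range (iY : Y →ₗ[ℝ] Z) :
        Submodule ℝ Z)) (x : X) (y : Y), iX x + iY y = (z : Z) → F z = f x + g y := by
      intro z x y hxy
      have hz' : iX x + iY y ∈
          LinearMap.range (iX : X →ₗ[ℝ] Z) ⊔ LinearMap.range (iY : Y →ₗ[ℝ] Z) := by
        rw [hxy]; exact z.2
      have : z = ⟨iX x + iY y, hz'⟩ := Subtype.ext hxy.symm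
      rw [this, hF' x y hz']
    refine ⟨F, hF', le_antisymm ?_ ?_, ?_⟩
    · -- sInf ≤ max
      refine csInf_le ⟨0, fun c hc => hc.1⟩ ⟨le_max_iff.mpr (Or.inl (norm_nonneg f)), ?_⟩
      intro z
      refine abs_le_mul_sInf (le_max_iff.mpr (Or.inl (norm_nonneg f))) ?_ ?_
      · obtain ⟨x, y, hxy⟩ := hrepz z
        exact ⟨‖x‖ + ‖y‖, x, y, hxy, rfl⟩
      · rintro r ⟨x, y, hxy, rfl⟩
        rw [hFz z x y hxy]
        calc |f x + g y| ≤ |f x| + |g y| := abs_add_le _ _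
          _ ≤ ‖f‖ * ‖x‖ + ‖g‖ * ‖y‖ := add_le_add (f.le_opNorm x) (g.le_opNorm y)
          _ ≤ max ‖f‖ ‖g‖ * ‖x‖ + max ‖f‖ ‖g‖ * ‖y‖ :=
              add_le_add (mul_le_mul_of_nonneg_right (le_max_left _ _) (norm_nonneg _))
                (mul_le_mul_of_nonneg_right (le_max_right _ _) (norm_nonneg _))
          _ = max ‖f‖ ‖g‖ * (‖x‖ + ‖y‖) := by ring
    · -- max ≤ sInf
      refine le_csInf ⟨max ‖f‖ ‖g‖, le_max_iff.mpr (Or.inl (norm_nonneg f)), ?_⟩ ?_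
      · intro z
        refine abs_le_mul_sInf (le_max_iff.mpr (Or.inl (norm_nonneg f))) ?_ ?_
        · obtain ⟨x, y, hxy⟩ := hrepz z
          exact ⟨‖x‖ + ‖y‖, x, y, hxy, rfl⟩
        · rintro r ⟨x, y, hxy, rfl⟩
          rw [hFz z x y hxy]
          calc |f x + g y| ≤ |f x| + |g y| := abs_add_le _ _
            _ ≤ ‖f‖ * ‖x‖ + ‖g‖ * ‖y‖ := add_le_add (f.le_opNorm x) (g.le_opNorm y)
            _ ≤ max ‖f‖ ‖g‖ * ‖x‖ + max ‖f‖ ‖g‖ * ‖y‖ :=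
                add_le_add (mul_le_mul_of_nonneg_right (le_max_left _ _) (norm_nonneg _))
                  (mul_le_mul_of_nonneg_right (le_max_right _ _) (norm_nonneg _))
            _ = max ‖f‖ ‖g‖ * (‖x‖ + ‖y‖) := by ring
      · rintro c ⟨hc0, hcb⟩
        have hfle : ‖f‖ ≤ c := by
          refine f.opNorm_le_bound hc0 fun x => ?_
          have hmem : iX x + iY 0 ∈
              LinearMap.range (iX : X →ₗ[ℝ] Z) ⊔ LinearMap.range (iY : Y →ₗ[ℝ] Z) := by
            apply Submodule.add_mem
            · exact Submodule.mem_sup_left ⟨x, rfl⟩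
            · exact Submodule.mem_sup_right ⟨0, rfl⟩
          have h1 : f x = F ⟨iX x + iY 0, hmem⟩ := by rw [hF' x 0 hmem]; simp
          have h2 : sumNorm iX iY (iX x + iY 0) ≤ ‖x‖ := by
            have := sumNorm_le iX iY (z := iX x + iY 0) (x := x) (y := 0) rfl
            simpa using this
          calc ‖f x‖ = |F ⟨iX x + iY 0, hmem⟩| := by rw [← h1]; rfl
            _ ≤ c * sumNorm iX iY (iX x + iY 0) := hcb _
            _ ≤ c * ‖x‖ := by gcongr
        have hgle : ‖g‖ ≤ c := by
          refine g.opNorm_le_bound hc0 fun y => ?_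
          have hmem : iX 0 + iY y ∈
              LinearMap.range (iX : X →ₗ[ℝ] Z) ⊔ LinearMap.range (iY : Y →ₗ[ℝ] Z) := by
            apply Submodule.add_mem
            · exact Submodule.mem_sup_left ⟨0, rfl⟩
            · exact Submodule.mem_sup_right ⟨y, rfl⟩
          have h1 : g y = F ⟨iX 0 + iY y, hmem⟩ := by rw [hF' 0 y hmem]; simp
          have h2 : sumNorm iX iY (iX 0 + iY y) ≤ ‖y‖ := by
            have := sumNorm_le iX iY (z := iX 0 + iY y) (x := 0) (y := y) rfl
            simpa using this
          calc ‖g y‖ = |F ⟨iX 0 + iY y, hmem⟩| := by rw [← h1]; rfl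
            _ ≤ c * sumNorm iX iY (iX 0 + iY y) := hcb _
            _ ≤ c * ‖y‖ := by gcongr
        exact max_le hfle hgle
    · -- uniqueness
      intro F' hF''
      apply LinearMap.ext
      intro z
      obtain ⟨x, y, hxy⟩ := hrepz z
      have hz' : iX x + iY y ∈
          LinearMap.range (iX : X →ₗ[ℝ] Z) ⊔ LinearMap.range (iY : Y →ₗ[ℝ] Z) := by
        rw [hxy]; exact z.2
      have hzeq : z = ⟨iX x + iY y, hz'⟩ := Subtype.ext hxy.symm
      rw [hzeq, hF'' x y hz', hF' x y hz']
  · -- Part 3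
    intro F ⟨c, hc0, hcb⟩
    have memX : ∀ x : X, iX x ∈
        LinearMap.range (iX : X →ₗ[ℝ] Z) ⊔ LinearMap.range (iY : Y →ₗ[ℝ] Z) :=
      fun x => Submodule.mem_sup_left ⟨x, rfl⟩
    have memY : ∀ y : Y, iY y ∈
        LinearMap.range (iX : X →ₗ[ℝ] Z) ⊔ LinearMap.range (iY : Y →ₗ[ℝ] Z) :=
      fun y => Submodule.mem_sup_right ⟨y, rfl⟩
    set jX : X →ₗ[ℝ] (LinearMap.range (iX : X →ₗ[ℝ] Z) ⊔ LinearMap.range (iY : Y →ₗ[ℝ] Z) :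
        Submodule ℝ Z) := (iX : X →ₗ[ℝ] Z).codRestrict _ memX with hjX
    set jY : Y →ₗ[ℝ] (LinearMap.range (iX : X →ₗ[ℝ] Z) ⊔ LinearMap.range (iY : Y →ₗ[ℝ] Z) :
        Submodule ℝ Z) := (iY : Y →ₗ[ℝ] Z).codRestrict _ memY with hjY
    have hfb : ∀ x : X, ‖(F.comp jX) x‖ ≤ c * ‖x‖ := by
      intro x
      have h2 : sumNorm iX iY (iX x) ≤ ‖x‖ := by
        have := sumNorm_le iX iY (z := iX x) (x := x) (y := 0) (by simp)
        simpa using this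
      calc ‖(F.comp jX) x‖ = |F (jX x)| := rfl
        _ ≤ c * sumNorm iX iY ((jX x : Z)) := hcb _
        _ = c * sumNorm iX iY (iX x) := rfl
        _ ≤ c * ‖x‖ := by gcongr
    have hgb : ∀ y : Y, ‖(F.comp jY) y‖ ≤ c * ‖y‖ := by
      intro y
      have h2 : sumNorm iX iY (iY y) ≤ ‖y‖ := by
        have := sumNorm_le iX iY (z := iY y) (x := 0) (y := y) (by simp)
        simpa using this
      calc ‖(F.comp jY) y‖ = |F (jY y)| := rfl
        _ ≤ c * sumNorm iX iY ((jY y : Z)) := hcb _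
        _ = c * sumNorm iX iY (iY y) := rfl
        _ ≤ c * ‖y‖ := by gcongr
    set f : StrongDual ℝ X := (F.comp jX).mkContinuous c hfb with hfdef
    set g : StrongDual ℝ Y := (F.comp jY).mkContinuous c hgb with hgdef
    refine ⟨f, g, ?_, ?_⟩
    · intro x y hxy
      have : jX x = jY y := Subtype.ext hxy
      simp only [hfdef, hgdef, LinearMap.mkContinuous_apply, LinearMap.comp_apply, this]
    · intro x y hz
      have : (⟨iX x + iY y, hz⟩ : (LinearMap.range (iX : X →ₗ[ℝ] Z) ⊔
          LinearMap.range (iY : Y →ₗ[ℝ] Z) : Submodule ℝ Z)) = jX x + jY y := by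
        apply Subtype.ext; rfl
      rw [this, map_add]
      simp only [hfdef, hgdef, LinearMap.mkContinuous_apply, LinearMap.comp_apply]
end
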